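/- Let E be an elliptic curve over a field k of characteristic zero such that for every prime ℓ the image of the mod-ℓ Galois representation ρ_ℓ: Gal(k̄/k) → GL₂(ℤ/ℓ) contains SL₂⁺(ℤ/ℓ). Then every finite Galois-submodule M of E(k̄) is equal to E[m] for some integer m ≥ 1. In particular the group E(k) of rational points is torsion-free. -/

import Mathlib

set_option synthInstance.maxHeartbeats 1000000
open Matrix

instance slSMul (n : ℕ) : SMul (SpecialLinearGroup (Fin 2) (ZMod n)) (Fin 2 → ZMod n) :=
  ⟨fun g v => (g : Matrix (Fin 2) (Fin 2) (ZMod n)).mulVec v⟩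

lemma slAct_def {n : ℕ} (g : SpecialLinearGroup (Fin 2) (ZMod n)) (v : Fin 2 → ZMod n) :
    g • v = (g : Matrix (Fin 2) (Fin 2) (ZMod n)).mulVec v := rfl

/-- The tautological action of `SL₂(ℤ/n)` on `(ℤ/n)²`. -/
instance slAct (n : ℕ) : DistribMulAction (SpecialLinearGroup (Fin 2) (ZMod n)) (Fin 2 → ZMod n) where
  one_smul v := by rw [slAct_def]; simp
  mul_smul g h v := by
    rw [slAct_def, slAct_def, slAct_def, Matrix.mulVec_mulVec]; rfl
  smul_zero g := Matrix.mulVec_zero _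
  smul_add g x y := Matrix.mulVec_add _ x y

/-- The action of `SL₂(ℤ/2)` on the three nonzero vectors of `(ℤ/2)²`. -/
instance nzAct : MulAction (SpecialLinearGroup (Fin 2) (ZMod 2)) {v : Fin 2 → ZMod 2 // v ≠ 0} where
  smul g v := ⟨g • (v : Fin 2 → ZMod 2), fun h => v.2 (by
    have := congrArg (fun w => g⁻¹ • w) h
    simpa [smul_smul] using this)⟩
  one_smul v := Subtype.ext (one_smul _ (v : Fin 2 → ZMod 2))
  mul_smul g h v := Subtype.ext (mul_smul g h (v : Fin 2 → ZMod 2))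

/-- The sign character of `SL₂(ℤ/2) ≅ S₃`, via the permutation action on
the three nonzero vectors of `(ℤ/2)²`. -/
noncomputable def signChar : SpecialLinearGroup (Fin 2) (ZMod 2) →* ℤˣ :=
  Equiv.Perm.sign.comp
    (MulAction.toPermHom (SpecialLinearGroup (Fin 2) (ZMod 2)) {v : Fin 2 → ZMod 2 // v ≠ 0})

/-- `SL₂⁺(ℤ/n)`: all of `SL₂(ℤ/n)` for odd `n`; for even `n` the kernel of the composition of
reduction mod 2 with the sign character `SL₂(ℤ/2) ≅ S₃ → {±1}`. -/
noncomputable def SL2Plus (n : ℕ) : Subgroup (SpecialLinearGroup (Fin 2) (ZMod n)) :=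
  if h : 2 ∣ n then
    (signChar.comp (SpecialLinearGroup.map (ZMod.castHom h (ZMod 2)))).ker
  else ⊤
-- auxiliary
def cSL : SpecialLinearGroup (Fin 2) (ZMod 2) := ⟨!![0,1;1,1], by decide⟩

lemma cSL_cube : cSL ^ 3 = 1 := Subtype.ext (by decide)

lemma cSL_mem : cSL ∈ SL2Plus 2 := by
  rw [SL2Plus, dif_pos (dvd_refl 2)]
  set φ := signChar.comp (SpecialLinearGroup.map (ZMod.castHom (dvd_refl 2) (ZMod 2)))
  rw [MonoidHom.mem_ker]
  have h3 : φ cSL ^ 3 = 1 := by rw [← map_pow, cSL_cube, φ.map_one]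
  have h2 : φ cSL ^ 2 = 1 := Int.units_sq _
  calc φ cSL = φ cSL ^ 3 * (φ cSL ^ 2)⁻¹ := by group
  _ = 1 := by rw [h3, h2]; simp

lemma mem_SL2Plus_of_odd {ℓ : ℕ} (h : ¬ 2 ∣ ℓ) (A : SpecialLinearGroup (Fin 2) (ZMod ℓ)) :
    A ∈ SL2Plus ℓ := by
  rw [SL2Plus, dif_neg h]; trivial

lemma exists_g_e0 {ℓ : ℕ} (hℓ : ℓ.Prime) {v : Fin 2 → ZMod ℓ} (hv : v ≠ 0) :
    ∃ g : SpecialLinearGroup (Fin 2) (ZMod ℓ), g • ![1,0] = v := by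
  haveI := Fact.mk hℓ
  by_cases h0 : v 0 = 0
  · have h1 : v 1 ≠ 0 := by
      intro h1; apply hv; funext i; fin_cases i <;> assumption
    refine ⟨⟨!![0, -(v 1)⁻¹; v 1, 0], ?_⟩, ?_⟩
    · simp [Matrix.det_fin_two_of, h1]
    · show Matrix.mulVec !![0, -(v 1)⁻¹; v 1, 0] ![1, 0] = v
      funext i; fin_cases i <;> simp [Matrix.mulVec, dotProduct, Fin.sum_univ_two, h0]
  · refine ⟨⟨!![v 0, 0; v 1, (v 0)⁻¹], ?_⟩, ?_⟩
    · simp [Matrix.det_fin_two_of, h0]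
    · show Matrix.mulVec !![v 0, 0; v 1, (v 0)⁻¹] ![1, 0] = v
      funext i; fin_cases i <;> simp [Matrix.mulVec, dotProduct, Fin.sum_univ_two]

lemma two_trichotomy : ∀ v w : Fin 2 → ZMod 2, v ≠ 0 → w ≠ 0 →
    (cSL • v = w ∨ (cSL ^ 2) • v = w ∨ (1 : SpecialLinearGroup (Fin 2) (ZMod 2)) • v = w) := by
  decide

lemma exists_sl2plus_smul {ℓ : ℕ} (hℓ : ℓ.Prime) {v w : Fin 2 → ZMod ℓ} (hv : v ≠ 0)
    (hw : w ≠ 0) : ∃ A ∈ SL2Plus ℓ, A • v = w := by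
  by_cases h2 : 2 ∣ ℓ
  · have hl2 : ℓ = 2 := ((Nat.prime_dvd_prime_iff_eq Nat.prime_two hℓ).1 h2).symm
    subst hl2
    rcases two_trichotomy v w hv hw with h | h | h
    · exact ⟨cSL, cSL_mem, h⟩
    · exact ⟨cSL ^ 2, pow_mem cSL_mem 2, h⟩
    · exact ⟨1, one_mem _, h⟩
  · obtain ⟨gv, hgv⟩ := exists_g_e0 hℓ hv
    obtain ⟨gw, hgw⟩ := exists_g_e0 hℓ hw
    refine ⟨gw * gv⁻¹, mem_SL2Plus_of_odd h2 _, ?_⟩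
    rw [mul_smul, ← hgv, inv_smul_smul, hgw]

lemma two_ne_zero_zmod {ℓ : ℕ} (hℓ : ℓ.Prime) (h2 : ¬ 2 ∣ ℓ) : (2 : ZMod ℓ) ≠ 0 := by
  haveI : NeZero ℓ := ⟨hℓ.ne_zero⟩
  intro h
  have : ℓ ∣ 2 := by
    have := (ZMod.natCast_eq_zero_iff 2 ℓ).1 (by exact_mod_cast h)
    exact this
  rcases (Nat.prime_dvd_prime_iff_eq hℓ Nat.prime_two).1 this with rfl
  exact h2 (dvd_refl 2)

lemma exists_sl2plus_move {ℓ : ℕ} (hℓ : ℓ.Prime) {v : Fin 2 → ZMod ℓ} (hv : v ≠ 0) :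
    ∃ A ∈ SL2Plus ℓ, A • v ≠ v := by
  by_cases h2 : 2 ∣ ℓ
  · have hl2 : ℓ = 2 := ((Nat.prime_dvd_prime_iff_eq Nat.prime_two hℓ).1 h2).symm
    subst hl2
    exact ⟨cSL, cSL_mem, by revert hv; revert v; decide⟩
  · have hnv : -v ≠ 0 := neg_ne_zero.2 hv
    obtain ⟨A, hA, hAv⟩ := exists_sl2plus_smul hℓ hv hnv
    refine ⟨A, hA, ?_⟩
    rw [hAv]
    intro h
    apply hv
    funext i
    have : -v i = v i := congrFun h i
    have h2v : v i + v i = 0 := by linear_combination -this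
    have hm : (2 : ZMod ℓ) * v i = 0 := by rw [two_mul]; exact h2v
    haveI := Fact.mk hℓ
    rcases mul_eq_zero.1 hm with h' | h'
    · exact absurd h' (two_ne_zero_zmod hℓ h2)
    · simpa using h'


set_option maxHeartbeats 1000000
open WeierstrassCurve WeierstrassCurve.Affine
open scoped Classical

/-- The `n`-torsion subgroup of an abelian group. -/
def torsionSub (A : Type*) [AddCommGroup A] (n : ℕ) : AddSubgroup A where
  carrier := {x | n • x = 0}
  zero_mem' := by simp
  add_mem' := by
    intro a b ha hb
    simp only [Set.mem_setOf_eq, smul_add] at *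
    rw [ha, hb, add_zero]
  neg_mem' := by
    intro a ha
    simp only [Set.mem_setOf_eq, smul_neg] at *
    rw [ha, neg_zero]

variable {k : Type*} [Field k] {K : Type*} [Field K] [Algebra k K]

/-- The action of a `k`-automorphism `σ` of `K` on the `K`-points of a Weierstrass curve `W`
defined over `k`. -/
noncomputable def galHom (W : WeierstrassCurve k) (σ : K ≃ₐ[k] K) : WeierstrassCurve.Affine.Point (W.baseChange K) →+ WeierstrassCurve.Affine.Point (W.baseChange K) :=
  WeierstrassCurve.Affine.Point.map (W' := W) σ.toAlgHom

/-- The Galois action preserves `n`-torsion. -/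
noncomputable def torsionGal (W : WeierstrassCurve k) (σ : K ≃ₐ[k] K) (n : ℕ)
    (P : torsionSub (WeierstrassCurve.Affine.Point (W.baseChange K)) n) : torsionSub (WeierstrassCurve.Affine.Point (W.baseChange K)) n :=
  ⟨galHom W σ P.1, by
    have h : n • (P : WeierstrassCurve.Affine.Point (W.baseChange K)) = 0 := P.2
    show n • galHom W σ P.1 = 0
    rw [← map_nsmul, h, map_zero]⟩

set_option linter.unusedSectionVars false

lemma mem_torsionSub {A : Type*} [AddCommGroup A] {n : ℕ} {x : A} :
    x ∈ torsionSub A n ↔ n • x = 0 := Iff.rfl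

section Curve
variable {k : Type*} [Field k] [CharZero k] (E : WeierstrassCurve k)

local notation "K" => AlgebraicClosure k

/-- Key lemma: if a Galois-stable subgroup contains a nonzero ℓ-torsion point, it contains
all of E[ℓ]. -/
lemma key_lemma
    (hρ : ∀ ℓ : ℕ, ℓ.Prime →
      ∃ e : torsionSub (WeierstrassCurve.Affine.Point (E.baseChange (K))) ℓ ≃+ (Fin 2 → ZMod ℓ),
        ∀ A ∈ SL2Plus ℓ, ∃ σ : K ≃ₐ[k] K,
          ∀ P : torsionSub (WeierstrassCurve.Affine.Point (E.baseChange (K))) ℓ, e (torsionGal E σ ℓ P) = A • e P)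
    {ℓ : ℕ} (hℓ : ℓ.Prime) (M : AddSubgroup (WeierstrassCurve.Affine.Point (E.baseChange (K))))
    (hstab : ∀ σ : K ≃ₐ[k] K, ∀ P ∈ M, galHom E σ P ∈ M)
    {P : WeierstrassCurve.Affine.Point (E.baseChange (K))} (hPM : P ∈ M) (hP : ℓ • P = 0) (hP0 : P ≠ 0) :
    ∀ Q : WeierstrassCurve.Affine.Point (E.baseChange (K)), ℓ • Q = 0 → Q ∈ M := by
  obtain ⟨e, he⟩ := hρ ℓ hℓ
  intro Q hQ
  by_cases hQ0 : Q = 0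
  · exact hQ0 ▸ M.zero_mem
  set Ph : torsionSub (WeierstrassCurve.Affine.Point (E.baseChange (K))) ℓ := ⟨P, hP⟩ with hPh
  set Qh : torsionSub (WeierstrassCurve.Affine.Point (E.baseChange (K))) ℓ := ⟨Q, hQ⟩ with hQh
  have hv : e Ph ≠ 0 := by
    intro h
    exact hP0 (congrArg Subtype.val (e.injective (h.trans e.map_zero.symm)))
  have hw : e Qh ≠ 0 := by
    intro h
    exact hQ0 (congrArg Subtype.val (e.injective (h.trans e.map_zero.symm)))
  obtain ⟨A, hA, hAv⟩ := exists_sl2plus_smul hℓ hv hw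
  obtain ⟨σ, hσ⟩ := he A hA
  have h1 : e (torsionGal E σ ℓ Ph) = e Qh := by rw [hσ Ph, hAv]
  have h2 : torsionGal E σ ℓ Ph = Qh := e.injective h1
  have h3 : galHom E σ P ∈ M := hstab σ P hPM
  have : (torsionGal E σ ℓ Ph : WeierstrassCurve.Affine.Point (E.baseChange (K))) = Q := congrArg Subtype.val h2
  rw [← this]
  exact h3

lemma fill_lemma
    (hρ : ∀ ℓ : ℕ, ℓ.Prime →
      ∃ e : torsionSub (WeierstrassCurve.Affine.Point (E.baseChange (K))) ℓ ≃+ (Fin 2 → ZMod ℓ),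
        ∀ A ∈ SL2Plus ℓ, ∃ σ : K ≃ₐ[k] K,
          ∀ P : torsionSub (WeierstrassCurve.Affine.Point (E.baseChange (K))) ℓ, e (torsionGal E σ ℓ P) = A • e P) :
    ∀ n : ℕ, 0 < n → ∀ M : AddSubgroup (WeierstrassCurve.Affine.Point (E.baseChange (K))),
      (∀ σ : K ≃ₐ[k] K, ∀ P ∈ M, galHom E σ P ∈ M) →
      ∀ P ∈ M, addOrderOf P = n →
      ∀ Q : WeierstrassCurve.Affine.Point (E.baseChange (K)), n • Q = 0 → Q ∈ M := by
  intro n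
  induction n using Nat.strong_induction_on with
  | _ n IH =>
    intro hn0 M hstab P hPM hord Q hQ
    rcases Nat.lt_or_ge n 2 with hn2 | hn2
    · interval_cases n
      have : Q = 0 := by simpa using hQ
      exact this ▸ M.zero_mem
    · -- n ≥ 2
      set ℓ := n.minFac with hℓdef
      have hℓ : ℓ.Prime := Nat.minFac_prime (by omega)
      have hℓdvd : ℓ ∣ n := Nat.minFac_dvd n
      set m := n / ℓ with hmdef
      have hℓm : ℓ * m = n := Nat.mul_div_cancel' hℓdvd
      have hm0 : 0 < m := Nat.div_pos (Nat.minFac_le hn0) hℓ.pos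
      have hmn : m < n := Nat.div_lt_self hn0 hℓ.one_lt
      -- the ℓ-torsion point m • P
      have hmP0 : m • P ≠ 0 := by
        intro h
        have hdvd : addOrderOf P ∣ m := addOrderOf_dvd_of_nsmul_eq_zero h
        rw [hord] at hdvd
        exact absurd (Nat.le_of_dvd hm0 hdvd) (by omega)
      have hℓmP : ℓ • (m • P) = 0 := by
        rw [smul_smul, hℓm, ← hord]
        exact addOrderOf_nsmul_eq_zero P
      have hEl : ∀ R : WeierstrassCurve.Affine.Point (E.baseChange (K)), ℓ • R = 0 → R ∈ M :=
        key_lemma E hρ hℓ M hstab (M.nsmul_mem hPM m) hℓmP hmP0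
      -- the subgroup ℓ • M
      set f : WeierstrassCurve.Affine.Point (E.baseChange (K)) →+ WeierstrassCurve.Affine.Point (E.baseChange (K)) := AddMonoidHom.mk' (fun x => ℓ • x) (fun a b => smul_add ℓ a b)
        with hf
      set N := M.map f with hN
      have hstabN : ∀ σ : K ≃ₐ[k] K, ∀ R ∈ N, galHom E σ R ∈ N := by
        intro σ R hR
        obtain ⟨x, hx, hfx⟩ := hR
        refine ⟨galHom E σ x, hstab σ x hx, ?_⟩
        have : f x = ℓ • x := rfl
        rw [hf]
        simp only [AddMonoidHom.mk'_apply]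
        rw [← map_nsmul, ← this, hfx]
      have hPN : ℓ • P ∈ N := ⟨P, hPM, rfl⟩
      have hordP' : addOrderOf (ℓ • P) = m := by
        have h1 : m • (ℓ • P) = 0 := by rw [smul_smul, mul_comm, hℓm, ← hord]; exact addOrderOf_nsmul_eq_zero P
        have hdvd : addOrderOf (ℓ • P) ∣ m := addOrderOf_dvd_of_nsmul_eq_zero h1
        refine Nat.dvd_antisymm hdvd ?_
        have h2 : (ℓ * addOrderOf (ℓ • P)) • P = 0 := by
          rw [mul_comm, ← smul_smul]
          exact addOrderOf_nsmul_eq_zero (ℓ • P)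
        have h3 : n ∣ ℓ * addOrderOf (ℓ • P) := hord ▸ addOrderOf_dvd_of_nsmul_eq_zero h2
        rw [← hℓm] at h3
        exact (mul_dvd_mul_iff_left (by exact_mod_cast hℓ.ne_zero : (ℓ:ℕ) ≠ 0)).1 h3
      -- apply the inductive hypothesis to ℓ • Q ∈ N
      have hℓQ : m • (ℓ • Q) = 0 := by rw [smul_smul, mul_comm, hℓm]; exact hQ
      have hQN : ℓ • Q ∈ N := IH m hmn hm0 N hstabN (ℓ • P) hPN hordP' (ℓ • Q) hℓQ
      obtain ⟨R, hRM, hfR⟩ := hQN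
      have hfR' : ℓ • R = ℓ • Q := hfR
      have hsub : ℓ • (Q - R) = 0 := by rw [nsmul_sub, hfR', sub_self]
      have : Q - R ∈ M := hEl _ hsub
      have : (Q - R) + R ∈ M := M.add_mem this hRM
      simpa using this

end Curve

open Matrix in
/-- if `E` is an elliptic curve over a field `k` of characteristic zero whose
mod-`ℓ` Galois image contains `SL₂⁺(ℤ/ℓ)` for every prime `ℓ`, then every finite Galois-stable
subgroup of `E(k̄)` is the full `m`-torsion subgroup `E[m]` for some `m ≥ 1`; in particular
`E(k)` is torsion-free. -/
theorem stmt_10 {k : Type*} [Field k] [CharZero k] (E : WeierstrassCurve k) (hΔ : E.Δ ≠ 0)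
    (hρ : ∀ ℓ : ℕ, ℓ.Prime →
      ∃ e : torsionSub (WeierstrassCurve.Affine.Point (E.baseChange (AlgebraicClosure k))) ℓ ≃+ (Fin 2 → ZMod ℓ),
        ∀ A ∈ SL2Plus ℓ, ∃ σ : AlgebraicClosure k ≃ₐ[k] AlgebraicClosure k,
          ∀ P : torsionSub (WeierstrassCurve.Affine.Point (E.baseChange (AlgebraicClosure k))) ℓ, e (torsionGal E σ ℓ P) = A • e P) :
    (∀ M : AddSubgroup (WeierstrassCurve.Affine.Point (E.baseChange (AlgebraicClosure k))),
      (M : Set (WeierstrassCurve.Affine.Point (E.baseChange (AlgebraicClosure k)))).Finite →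
      (∀ (σ : AlgebraicClosure k ≃ₐ[k] AlgebraicClosure k), ∀ P ∈ M, galHom E σ P ∈ M) →
      ∃ m : ℕ, 1 ≤ m ∧ M = torsionSub (WeierstrassCurve.Affine.Point (E.baseChange (AlgebraicClosure k))) m) ∧
    (∀ P : WeierstrassCurve.Affine.Point (E.baseChange k), ∀ n : ℕ, 0 < n → n • P = 0 → P = 0) := by
  constructor
  · intro M hfin hstab
    haveI : Finite ↥M := hfin.to_subtype
    have hee : AddMonoid.ExponentExists ↥M := AddMonoid.ExponentExists.of_finite
    obtain ⟨g, hg⟩ := AddMonoid.exists_addOrderOf_eq_exponent hee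
    have hpos : 0 < AddMonoid.exponent ↥M := AddMonoid.exponent_pos.mpr hee
    refine ⟨AddMonoid.exponent ↥M, hpos, ?_⟩
    ext x
    rw [mem_torsionSub]
    constructor
    · intro hx
      have h := AddMonoid.exponent_nsmul_eq_zero (⟨x, hx⟩ : M)
      simpa using congrArg Subtype.val h
    · intro hx
      refine fill_lemma E hρ (AddMonoid.exponent ↥M) hpos M hstab g.1 g.2 ?_ x hx
      rw [AddSubgroup.addOrderOf_coe, hg]
  · intro P n hn hnP
    by_contra hP0
    have hfo : IsOfFinAddOrder P := isOfFinAddOrder_iff_nsmul_eq_zero.2 ⟨n, hn, hnP⟩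
    set d := addOrderOf P with hd
    have hd0 : 0 < d := hfo.addOrderOf_pos
    have hd1 : d ≠ 1 := fun h => hP0 (AddMonoid.addOrderOf_eq_one_iff.1 h)
    set ℓ := d.minFac with hℓdef
    have hℓ : ℓ.Prime := Nat.minFac_prime hd1
    have hℓdvd : ℓ ∣ d := Nat.minFac_dvd d
    set P₁ := (d / ℓ) • P with hP₁def
    have hdl0 : 0 < d / ℓ := Nat.div_pos (Nat.minFac_le hd0) hℓ.pos
    have hdl : d / ℓ < d := Nat.div_lt_self hd0 hℓ.one_lt
    have hP₁0 : P₁ ≠ 0 := by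
      intro h
      have hdvd : d ∣ d / ℓ := hd ▸ addOrderOf_dvd_of_nsmul_eq_zero h
      exact absurd (Nat.le_of_dvd hdl0 hdvd) (by omega)
    have hℓP₁ : ℓ • P₁ = 0 := by
      rw [hP₁def, smul_smul, Nat.mul_div_cancel' hℓdvd, hd]
      exact addOrderOf_nsmul_eq_zero P
    set φ : WeierstrassCurve.Affine.Point (E.baseChange (k)) →+ WeierstrassCurve.Affine.Point (E.baseChange (AlgebraicClosure k)) :=
      Point.map (W' := E) (Algebra.ofId k (AlgebraicClosure k)) with hφ
    set Q := φ P₁ with hQdef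
    have hQ0 : Q ≠ 0 := by
      intro h
      exact hP₁0 (Point.map_injective (W' := E) (f := Algebra.ofId k (AlgebraicClosure k))
        (h.trans (map_zero φ).symm))
    have hQt : ℓ • Q = 0 := by rw [hQdef, ← map_nsmul, hℓP₁, map_zero]
    obtain ⟨e, he⟩ := hρ ℓ hℓ
    set Qh : torsionSub (WeierstrassCurve.Affine.Point (E.baseChange (AlgebraicClosure k))) ℓ := ⟨Q, hQt⟩ with hQh
    have hv : e Qh ≠ 0 := by
      intro h
      exact hQ0 (congrArg Subtype.val (e.injective (h.trans e.map_zero.symm)))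
    obtain ⟨A, hA, hAv⟩ := exists_sl2plus_move hℓ hv
    obtain ⟨σ, hσ⟩ := he A hA
    have hfix : galHom E σ Q = Q := by
      rw [hQdef]
      show Point.map (W' := E) σ.toAlgHom (Point.map (W' := E) (Algebra.ofId k (AlgebraicClosure k)) P₁) = _
      rw [Point.map_map]
      have hcomp : σ.toAlgHom.comp (Algebra.ofId k (AlgebraicClosure k)) =
          Algebra.ofId k (AlgebraicClosure k) := Subsingleton.elim _ _
      rw [hcomp]
    have hQfix : torsionGal E σ ℓ Qh = Qh := Subtype.ext hfix
    have := hσ Qh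
    rw [hQfix] at this
    exact hAv this.symm
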